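/- arXiv:2303.02738 — 5 statements merged into one kernel-verified Lean document; each statement's English description precedes it below -/
import Mathlib

section
/- Let $0 < h < 1$, $0 \le k \le 2$, and let $t \ge \left(\frac{24}{1-h}\ln\frac{12}{1-h}\right)^{\frac{1}{1-h}}$. Then $\max_{1 \le i \le t}\left(i^{-k}\prod_{j=i+1}^t (1-j^{-h})\right) \le 4 t^{-k}$. -/
open Real Finset

lemma aux_log (u : ℝ) (hu0 : 0 < u) (hu1 : u ≤ 1) (t : ℝ)
    (ht : ((24/u) * Real.log (12/u)) ^ ((1:ℝ)/u) ≤ t) : 4 * Real.log t ≤ t ^ u := by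
  set c : ℝ := 4 / u with hc
  have hcpos : 0 < c := by positivity
  have hc4 : 4 ≤ c := by rw [hc, le_div_iff₀ hu0]; nlinarith
  have he1 : Real.exp 1 ≤ 3 * c := by
    have := Real.exp_one_lt_d9; linarith
  have hlog3c : 1 ≤ Real.log (3 * c) := by
    rw [← Real.log_exp 1]
    exact Real.log_le_log (Real.exp_pos 1) he1
  have he24 : (24:ℝ)/u = 6 * c := by rw [hc]; ring
  have he12 : (12:ℝ)/u = 3 * c := by rw [hc]; ring
  rw [he24, he12] at ht
  set B : ℝ := 6 * c * Real.log (3 * c) with hB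
  have hBpos : 24 ≤ B := by nlinarith
  have ht1 : (1:ℝ) ≤ t := by
    refine le_trans ?_ ht
    have := Real.rpow_le_rpow (by norm_num) (show (1:ℝ) ≤ B by linarith) (by positivity : (0:ℝ) ≤ 1/u)
    rwa [Real.one_rpow] at this
  have htpos : 0 < t := by linarith
  have hx : B ≤ t ^ u := by
    have h1 := Real.rpow_le_rpow (Real.rpow_nonneg (by linarith) _) ht hu0.le
    rwa [← Real.rpow_mul (by linarith), one_div_mul_cancel hu0.ne', Real.rpow_one] at h1
  set x : ℝ := t ^ u with hxdef
  have hxpos : 0 < x := by linarith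
  have hlogx : Real.log x = u * Real.log t := Real.log_rpow htpos u
  have hxc : 0 < x / (2*c) := by positivity
  have h1 : Real.log (x/(2*c)) ≤ x/(2*c) - 1 := Real.log_le_sub_one_of_pos hxc
  have h2 : Real.log (x/(2*c)) = Real.log x - Real.log (2*c) :=
    Real.log_div hxpos.ne' (by positivity)
  have h3 : Real.log (2*c) ≤ 3 * Real.log (3*c) := by
    have ha : Real.log (2*c) ≤ Real.log (3*c) := Real.log_le_log (by positivity) (by linarith)
    linarith
  have hkey : c * Real.log x ≤ x := by
    have e1 : c * (x/(2*c)) = x / 2 := by field_simp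
    nlinarith
  have h4 : 4 * Real.log t = c * Real.log x := by
    rw [hlogx, hc]; field_simp
  linarith

theorem stmt_1 (h k : ℝ) (hh0 : 0 < h) (hh1 : h < 1) (hk0 : 0 ≤ k) (hk2 : k ≤ 2)
    (t : ℕ) (ht : ((24 / (1 - h)) * Real.log (12 / (1 - h))) ^ ((1:ℝ) / (1 - h)) ≤ (t : ℝ)) :
    ∀ i ∈ Finset.Icc 1 t,
      (i : ℝ) ^ (-k) * ∏ j ∈ Finset.Icc (i + 1) t, (1 - (j : ℝ) ^ (-h))
        ≤ 4 * (t : ℝ) ^ (-k) := by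
  intro i hi
  rw [Finset.mem_Icc] at hi
  obtain ⟨hi1, hit⟩ := hi
  have ht1 : 1 ≤ t := le_trans hi1 hit
  have htpos : (0:ℝ) < t := by exact_mod_cast ht1
  have hipos : (0:ℝ) < i := by exact_mod_cast hi1
  have hik : (0:ℝ) ≤ (i:ℝ) ^ (-k) := Real.rpow_nonneg hipos.le _
  have htk : (0:ℝ) ≤ (t:ℝ) ^ (-k) := Real.rpow_nonneg htpos.le _
  have hfac_nonneg : ∀ j ∈ Finset.Icc (i+1) t, (0:ℝ) ≤ 1 - (j:ℝ) ^ (-h) := by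
    intro j hj
    rw [Finset.mem_Icc] at hj
    have hj1 : (1:ℝ) ≤ j := by exact_mod_cast le_trans (le_trans hi1 (Nat.le_succ i)) hj.1
    have := Real.rpow_le_one_of_one_le_of_nonpos hj1 (by linarith : -h ≤ 0)
    linarith
  have hprod_nonneg : 0 ≤ ∏ j ∈ Finset.Icc (i+1) t, (1 - (j:ℝ) ^ (-h)) :=
    Finset.prod_nonneg hfac_nonneg
  by_cases hcase : t ≤ 2 * i
  · -- large i
    have hprod_le_one : ∏ j ∈ Finset.Icc (i+1) t, (1 - (j:ℝ) ^ (-h)) ≤ 1 := by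
      apply Finset.prod_le_one hfac_nonneg
      intro j hj
      have : (0:ℝ) ≤ (j:ℝ) ^ (-h) := Real.rpow_nonneg (Nat.cast_nonneg j) _
      linarith
    have h1 : (i:ℝ) ^ (-k) ≤ ((t:ℝ)/2) ^ (-k) := by
      apply Real.rpow_le_rpow_of_nonpos (by positivity) ?_ (by linarith)
      have : (t:ℝ) ≤ 2 * i := by exact_mod_cast hcase
      linarith
    have h2 : ((t:ℝ)/2) ^ (-k) = (t:ℝ) ^ (-k) * (2:ℝ) ^ k := by
      rw [Real.div_rpow htpos.le (by norm_num), Real.rpow_neg (by norm_num : (0:ℝ) ≤ 2),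
        div_inv_eq_mul]
    have h3 : (2:ℝ) ^ k ≤ 4 := by
      have := Real.rpow_le_rpow_of_exponent_le (by norm_num : (1:ℝ) ≤ 2) hk2
      rwa [show ((2:ℝ):ℝ) ^ (2:ℝ) = 4 by
        rw [show (2:ℝ) = ((2:ℕ):ℝ) by norm_num, Real.rpow_natCast]; norm_num] at this
    nlinarith
  · -- small i
    push_neg at hcase
    have hti : i ≤ t := hit
    have hhalf : (t:ℝ) / 2 ≤ (t:ℝ) - i := by
      have : (2*i:ℕ) < t := hcase
      have : ((2*i:ℕ):ℝ) < t := by exact_mod_cast this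
      push_cast at this
      linarith
    have hth : (0:ℝ) ≤ (t:ℝ) ^ (-h) := Real.rpow_nonneg htpos.le _
    have hth1 : (t:ℝ) ^ (-h) ≤ 1 :=
      Real.rpow_le_one_of_one_le_of_nonpos (by exact_mod_cast ht1) (by linarith)
    -- product bound
    have hstep : ∀ j ∈ Finset.Icc (i+1) t, (1 - (j:ℝ) ^ (-h)) ≤ (1 - (t:ℝ) ^ (-h)) := by
      intro j hj
      rw [Finset.mem_Icc] at hj
      have hjpos : (0:ℝ) < j := by
        have : 1 ≤ j := le_trans (le_trans hi1 (Nat.le_succ i)) hj.1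
        exact_mod_cast this
      have hjt : (j:ℝ) ≤ t := by exact_mod_cast hj.2
      have := Real.rpow_le_rpow_of_nonpos hjpos hjt (by linarith : -h ≤ 0)
      linarith
    have hP1 : ∏ j ∈ Finset.Icc (i+1) t, (1 - (j:ℝ) ^ (-h))
        ≤ (1 - (t:ℝ) ^ (-h)) ^ (t - i) := by
      have := Finset.prod_le_prod hfac_nonneg hstep
      rwa [Finset.prod_const, Nat.card_Icc, show t + 1 - (i+1) = t - i by omega] at this
    have hP2 : (1 - (t:ℝ) ^ (-h)) ^ (t - i) ≤ Real.exp (-((t:ℝ) - i) * (t:ℝ) ^ (-h)) := by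
      calc (1 - (t:ℝ) ^ (-h)) ^ (t - i)
          ≤ (Real.exp (-(t:ℝ) ^ (-h))) ^ (t - i) := by
            apply pow_le_pow_left₀ (by linarith)
            have := Real.add_one_le_exp (-(t:ℝ) ^ (-h))
            linarith
        _ = Real.exp (((t - i : ℕ):ℝ) * (-(t:ℝ) ^ (-h))) := by
            rw [← Real.exp_nat_mul]
        _ = Real.exp (-((t:ℝ) - i) * (t:ℝ) ^ (-h)) := by
            rw [Nat.cast_sub hti]; ring_nf
    have hlog : 4 * Real.log t ≤ (t:ℝ) ^ (1 - h) :=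
      aux_log (1 - h) (by linarith) (by linarith) t ht
    have hsplit : (t:ℝ) ^ (1 - h) = (t:ℝ) * (t:ℝ) ^ (-h) := by
      rw [show (1:ℝ) - h = 1 + (-h) by ring, Real.rpow_add htpos, Real.rpow_one]
    have hP3 : Real.exp (-((t:ℝ) - i) * (t:ℝ) ^ (-h)) ≤ (t:ℝ) ^ (-(2:ℝ)) := by
      have he : (t:ℝ) ^ (-(2:ℝ)) = Real.exp (Real.log t * (-2)) := Real.rpow_def_of_pos htpos _
      rw [he]
      apply Real.exp_le_exp.mpr
      nlinarith
    have hP4 : (t:ℝ) ^ (-(2:ℝ)) ≤ (t:ℝ) ^ (-k) :=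
      Real.rpow_le_rpow_of_exponent_le (by exact_mod_cast ht1) (by linarith)
    have hik1 : (i:ℝ) ^ (-k) ≤ 1 :=
      Real.rpow_le_one_of_one_le_of_nonpos (by exact_mod_cast hi1) (by linarith)
    have hPt : ∏ j ∈ Finset.Icc (i+1) t, (1 - (j:ℝ) ^ (-h)) ≤ (t:ℝ) ^ (-k) := by
      linarith
    nlinarith
end

section
/- Let $\Omega \subseteq \Delta_{\mathcal{A}}$ be a convex subset of the probability simplex over a finite set $\mathcal{A}$, let $x \in \Omega$ have all coordinates positive, let $\ell \in [0,\infty)^{\mathcal{A}}$, $\eta > 0$, and $\epsilon \in [0, 1/\eta]^{\mathcal{A}}$. Define $x' = \arg\min_{\tilde{x} \in \Omega}\left\{ \sum_{a} \tilde{x}_a(\ell_a + \epsilon_a \ln x_a) + \frac{1}{\eta}\mathrm{KL}(\tilde{x}, x)\right\}$. Then for any $u \in \Omega$, $(x-u)^{\top}(\ell + \epsilon \ln x) \le \frac{\mathrm{KL}(u,x) - \mathrm{KL}(u,x')}{\eta} + \eta \sum_a x_a \ell_a^2 + \eta \sum_a \epsilon_a^2 \ln^2 x_a$. -/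
open Finset

lemma aux_exp_quad {w : ℝ} (hw : 0 ≤ w) : Real.exp (-w) - 1 + w ≤ w ^ 2 := by
  have h : Real.exp (-w) * Real.exp w = 1 := by rw [← Real.exp_add]; simp
  nlinarith [Real.add_one_le_exp w, Real.add_one_le_exp (-w), Real.exp_pos (-w), hw]

lemma coord_bound (xa p A s : ℝ) (hx0 : 0 < xa) (hp : 0 ≤ p) (hA : 0 ≤ A)
    (hs : 0 ≤ s) (hsu : s ≤ -Real.log xa) :
    (xa - p) * (A - s) - p * (Real.log p - Real.log xa) + p - xa ≤ xa * A ^ 2 + s ^ 2 := by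
  have step1 : (xa - p) * (A - s) - p * (Real.log p - Real.log xa) + p - xa
      ≤ xa * (Real.exp (-(A - s)) - 1 + (A - s)) := by
    rcases eq_or_lt_of_le hp with h0 | hppos
    · rw [← h0]
      nlinarith [Real.exp_pos (-(A - s))]
    · have hL : Real.log p - Real.log xa = Real.log (p / xa) := (Real.log_div hppos.ne' hx0.ne').symm
      have h3 : Real.exp (-(A - s) - Real.log (p / xa)) = Real.exp (-(A - s)) * (xa / p) := by
        rw [Real.exp_sub, Real.exp_log (by positivity), div_div_eq_mul_div, mul_div_assoc]
      have h2 := Real.add_one_le_exp (-(A - s) - Real.log (p / xa))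
      rw [h3] at h2
      have key : p * (1 - (A - s) - Real.log (p / xa)) ≤ xa * Real.exp (-(A - s)) := by
        have h4 := mul_le_mul_of_nonneg_left h2 hppos.le
        have h5 : p * (Real.exp (-(A - s)) * (xa / p)) = xa * Real.exp (-(A - s)) := by
          field_simp
        nlinarith [h4, h5]
      rw [hL]
      nlinarith [key]
  have step2 : xa * (Real.exp (-(A - s)) - 1 + (A - s)) ≤ xa * A ^ 2 + s ^ 2 := by
    rcases le_or_gt s A with hcase | hcase
    · have h1 : Real.exp (-(A - s)) - 1 + (A - s) ≤ (A - s) ^ 2 := aux_exp_quad (by linarith)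
      have h2 : (A - s) ^ 2 ≤ A ^ 2 := by nlinarith
      nlinarith [mul_le_mul_of_nonneg_left h1 hx0.le, mul_le_mul_of_nonneg_left h2 hx0.le, sq_nonneg s]
    · have hu : Real.log xa ≤ -s := by linarith
      have hxe : xa ≤ Real.exp (-s) := by
        calc xa = Real.exp (Real.log xa) := (Real.exp_log hx0).symm
        _ ≤ _ := Real.exp_le_exp.mpr hu
      have hB : 0 ≤ Real.exp (-(A - s)) - 1 + (A - s) := by
        nlinarith [Real.add_one_le_exp (-(A - s))]
      have hstep := mul_le_mul_of_nonneg_right hxe hB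
      have hprod : Real.exp (-s) * Real.exp (-(A - s)) = Real.exp (-A) := by
        rw [← Real.exp_add]; ring_nf
      have h5 : Real.exp (-A) * (1 - (s - A)) ≤ Real.exp (-s) := by
        rw [show (-s : ℝ) = -A + -(s - A) by ring, Real.exp_add]
        have := Real.add_one_le_exp (-(s - A))
        nlinarith [Real.exp_pos (-A)]
      have hexpA1 : Real.exp (-A) ≤ 1 := Real.exp_le_one_iff.mpr (by linarith)
      have hd : Real.exp (-A) - Real.exp (-s) - (s - A) * Real.exp (-s) ≤ (s - A) ^ 2 := by
        nlinarith [mul_le_mul_of_nonneg_left h5 (by linarith : (0:ℝ) ≤ s - A), Real.exp_pos (-A), sq_nonneg (s - A)]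
      have hss : (s - A) ^ 2 ≤ s ^ 2 := by nlinarith
      nlinarith [hstep, hprod, hd, hss, sq_nonneg A, mul_nonneg hx0.le (sq_nonneg A)]
  linarith

lemma ent_conv (p q c t : ℝ) (hp : 0 ≤ p) (hq : 0 ≤ q) (ht0 : 0 ≤ t) (ht1 : t ≤ 1) :
    ((1 - t) * p + t * q) * (Real.log ((1 - t) * p + t * q) - c)
      ≤ (1 - t) * (p * (Real.log p - c)) + t * (q * (Real.log q - c)) := by
  have h := Real.convexOn_mul_log.2 (Set.mem_Ici.mpr hp) (Set.mem_Ici.mpr hq)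
    (by linarith : (0:ℝ) ≤ 1 - t) ht0 (by ring)
  simp only [smul_eq_mul] at h
  nlinarith [h]

noncomputable def KLdiv {A : Type*} [Fintype A] (p q : A → ℝ) : ℝ :=
  ∑ a, p a * Real.log (p a / q a)

theorem stmt_6 {A : Type*} [Fintype A]
    (Ω : Set (A → ℝ))
    (hΩconv : Convex ℝ Ω)
    (hΩsub : ∀ p ∈ Ω, (∀ a, 0 ≤ p a) ∧ ∑ a, p a = 1)
    (x : A → ℝ) (hxΩ : x ∈ Ω) (hxpos : ∀ a, 0 < x a)
    (ℓ : A → ℝ) (hℓ : ∀ a, 0 ≤ ℓ a)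
    (η : ℝ) (hη : 0 < η)
    (ε : A → ℝ) (hε : ∀ a, 0 ≤ ε a ∧ ε a ≤ 1 / η)
    (x' : A → ℝ) (hx'Ω : x' ∈ Ω)
    (hargmin : ∀ z ∈ Ω,
      (∑ a, x' a * (ℓ a + ε a * Real.log (x a))) + (1 / η) * KLdiv x' x
        ≤ (∑ a, z a * (ℓ a + ε a * Real.log (x a))) + (1 / η) * KLdiv z x) :
    ∀ u ∈ Ω,
      ∑ a, (x a - u a) * (ℓ a + ε a * Real.log (x a))
        ≤ (KLdiv u x - KLdiv u x') / η
          + η * ∑ a, x a * (ℓ a) ^ 2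
          + η * ∑ a, (ε a) ^ 2 * (Real.log (x a)) ^ 2 := by
  classical
  set g : A → ℝ := fun a => ℓ a + ε a * Real.log (x a) with hg
  -- basic facts
  have hx'0 : ∀ a, 0 ≤ x' a := (hΩsub x' hx'Ω).1
  have hx'sum : ∑ a, x' a = 1 := (hΩsub x' hx'Ω).2
  have hxsum : ∑ a, x a = 1 := (hΩsub x hxΩ).2
  have hx1 : ∀ a, x a ≤ 1 := by
    intro a
    have h := Finset.single_le_sum (f := x) (fun b _ => (hΩsub x hxΩ).1 b) (Finset.mem_univ a)
    linarith [h, hxsum.le, hxsum.ge]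
  -- KL rewriting
  have hKL : ∀ (p q : A → ℝ), (∀ a, 0 < q a) →
      KLdiv p q = ∑ a, p a * (Real.log (p a) - Real.log (q a)) := by
    intro p q hq
    unfold KLdiv
    apply Finset.sum_congr rfl
    intro a _
    by_cases hz : p a = 0
    · simp [hz]
    · rw [Real.log_div hz (hq a).ne']
  -- scaled objective
  set F : (A → ℝ) → ℝ := fun z =>
    η * (∑ a, z a * g a) + ∑ a, z a * (Real.log (z a) - Real.log (x a)) with hFdef
  have hF : ∀ z ∈ Ω, F x' ≤ F z := by
    intro z hz
    have h := mul_le_mul_of_nonneg_left (hargmin z hz) hη.le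
    have e : ∀ w : A → ℝ, η * ((∑ a, w a * g a) + (1 / η) * KLdiv w x) = F w := by
      intro w
      simp only [hFdef]
      rw [hKL w x hxpos]
      field_simp
    rw [e x', e z] at h
    exact h
  -- positivity of x'
  have hx'pos : ∀ a, 0 < x' a := by
    intro a0
    rcases (hx'0 a0).lt_or_eq with hlt | heq
    · exact hlt
    exfalso
    have hC0 : F x' - F x ≤ 0 := sub_nonpos.mpr (hF x hxΩ)
    set t := Real.exp ((F x' - F x - 1) / x a0) with ht
    have ht0 : 0 < t := Real.exp_pos _
    have ht1 : t < 1 := by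
      rw [ht]
      exact Real.exp_lt_one_iff.mpr (div_neg_of_neg_of_pos (by linarith) (hxpos a0))
    set z : A → ℝ := fun a => (1 - t) * x' a + t * x a with hz
    have hzΩ : z ∈ Ω := by
      have h := hΩconv hx'Ω hxΩ (by linarith : (0:ℝ) ≤ 1 - t) ht0.le (by ring)
      have hzeq : z = (1 - t) • x' + t • x := by
        funext a; simp [hz, smul_eq_mul]
      rw [hzeq]; exact h
    have hcoord : ∀ a, z a * (Real.log (z a) - Real.log (x a)) ≤
        (1 - t) * (x' a * (Real.log (x' a) - Real.log (x a)))
        + t * (x a * (Real.log (x a) - Real.log (x a)))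
        + (if a = a0 then t * x a0 * Real.log t else 0) := by
      intro a
      by_cases ha : a = a0
      · subst ha
        rw [if_pos rfl]
        have hz0 : z a = t * x a := by simp [hz, ← heq]
        rw [hz0, ← heq, Real.log_mul ht0.ne' (hxpos a).ne']
        exact le_of_eq (by ring)
      · rw [if_neg ha, add_zero]
        exact ent_conv (x' a) (x a) (Real.log (x a)) t (hx'0 a) (hxpos a).le ht0.le ht1.le
    have hsumz : ∑ a, z a * g a = (1 - t) * ∑ a, x' a * g a + t * ∑ a, x a * g a := by
      rw [Finset.mul_sum, Finset.mul_sum, ← Finset.sum_add_distrib]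
      apply Finset.sum_congr rfl
      intro a _
      simp only [hz]; ring
    have hEnt : ∑ a, z a * (Real.log (z a) - Real.log (x a))
        ≤ (1 - t) * ∑ a, x' a * (Real.log (x' a) - Real.log (x a))
          + t * ∑ a, x a * (Real.log (x a) - Real.log (x a))
          + t * x a0 * Real.log t := by
      calc ∑ a, z a * (Real.log (z a) - Real.log (x a)) ≤ _ :=
            Finset.sum_le_sum (fun a _ => hcoord a)
        _ = _ := by
            rw [Finset.sum_add_distrib, Finset.sum_add_distrib, Finset.sum_ite_eq' Finset.univ a0]
            simp [Finset.mul_sum]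
    have hFz : F z ≤ (1 - t) * F x' + t * F x + t * x a0 * Real.log t := by
      simp only [hFdef]
      rw [hsumz]
      nlinarith [hEnt]
    have hcontr := hF z hzΩ
    have h6 : t * (F x' - F x - x a0 * Real.log t) ≤ 0 := by nlinarith [hcontr, hFz]
    have h7 : F x' - F x - x a0 * Real.log t ≤ 0 := by nlinarith [h6, ht0]
    rw [ht, Real.log_exp] at h7
    have h8 : x a0 * ((F x' - F x - 1) / x a0) = F x' - F x - 1 :=
      mul_div_cancel₀ _ (hxpos a0).ne'
    linarith [h7, h8]
  -- main part
  intro u huΩ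
  have hu0 : ∀ a, 0 ≤ u a := (hΩsub u huΩ).1
  have husum : ∑ a, u a = 1 := (hΩsub u huΩ).2
  -- first-order optimality
  have hFO : 0 ≤ η * (∑ a, (u a - x' a) * g a)
      + ∑ a, (u a - x' a) * (Real.log (x' a) - Real.log (x a)) := by
    set c : ℝ := ∑ a, (u a - x' a) * g a with hc
    set S : ℝ → ℝ := fun t => ∑ a, (u a - x' a) *
      (Real.log (x' a + t * (u a - x' a)) - Real.log (x a) + 1) with hS
    have hev : ∀ t ∈ Set.Ioo (0:ℝ) 1, 0 ≤ η * c + S t := by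
      intro t ht
      set z : A → ℝ := fun a => x' a + t * (u a - x' a) with hz
      have hzΩ : z ∈ Ω := by
        have h := hΩconv hx'Ω huΩ (by linarith [ht.2] : (0:ℝ) ≤ 1 - t) ht.1.le (by ring)
        have hzeq : z = (1 - t) • x' + t • u := by
          funext a; simp [hz, smul_eq_mul]; ring
        rw [hzeq]; exact h
      have hzpos : ∀ a, 0 < z a := by
        intro a
        have he : z a = (1 - t) * x' a + t * u a := by simp [hz]; ring
        rw [he]
        have h1 := mul_pos (by linarith [ht.2] : (0:ℝ) < 1 - t) (hx'pos a)
        nlinarith [mul_nonneg ht.1.le (hu0 a)]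
      have hgrad : ∀ a, z a * (Real.log (z a) - Real.log (x a))
          - x' a * (Real.log (x' a) - Real.log (x a))
          ≤ t * ((u a - x' a) * (Real.log (z a) - Real.log (x a) + 1)) := by
        intro a
        have hkey : x' a - z a ≤ x' a * (Real.log (x' a) - Real.log (z a)) := by
          rcases eq_or_lt_of_le (hx'0 a) with h0 | hpos
          · rw [← h0]; simp; linarith [hzpos a]
          · have h1 := Real.add_one_le_exp (Real.log (z a) - Real.log (x' a))
            rw [Real.exp_sub, Real.exp_log (hzpos a), Real.exp_log hpos] at h1
            have h2 := mul_le_mul_of_nonneg_left h1 hpos.le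
            rw [mul_div_cancel₀ _ hpos.ne'] at h2
            nlinarith [h2]
        have hzx : z a - x' a = t * (u a - x' a) := by simp [hz]
        have hrw : t * ((u a - x' a) * (Real.log (z a) - Real.log (x a) + 1))
            = (z a - x' a) * (Real.log (z a) - Real.log (x a) + 1) := by
          rw [hzx]; ring
        rw [hrw]
        nlinarith [hkey]
      have h0 : F x' ≤ F z := hF z hzΩ
      have hlin : ∑ a, z a * g a = ∑ a, x' a * g a + t * c := by
        rw [hc, Finset.mul_sum, ← Finset.sum_add_distrib]
        apply Finset.sum_congr rfl
        intro a _
        simp only [hz]; ring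
      have hsum2 : ∑ a, (z a * (Real.log (z a) - Real.log (x a))
          - x' a * (Real.log (x' a) - Real.log (x a))) ≤ t * S t := by
        rw [hS, Finset.mul_sum]
        exact Finset.sum_le_sum (fun a _ => hgrad a)
      have hsplit : ∑ a, (z a * (Real.log (z a) - Real.log (x a))
          - x' a * (Real.log (x' a) - Real.log (x a)))
          = ∑ a, z a * (Real.log (z a) - Real.log (x a))
            - ∑ a, x' a * (Real.log (x' a) - Real.log (x a)) :=
        Finset.sum_sub_distrib _ _
      have h8 : 0 ≤ t * (η * c + S t) := by
        simp only [hFdef] at h0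
        nlinarith [h0, hlin, hsum2, hsplit]
      nlinarith [h8, ht.1]
    have hlim : Filter.Tendsto (fun t => η * c + S t) (nhdsWithin 0 (Set.Ioi 0))
        (nhds (η * c + S 0)) := by
      apply Filter.Tendsto.mono_left _ nhdsWithin_le_nhds
      apply Filter.Tendsto.const_add
      apply tendsto_finset_sum
      intro a _
      apply Filter.Tendsto.const_mul
      apply Filter.Tendsto.add_const
      apply Filter.Tendsto.sub_const
      have hb : Filter.Tendsto (fun t : ℝ => x' a + t * (u a - x' a)) (nhds 0)
          (nhds (x' a + 0 * (u a - x' a))) := by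
        exact (continuous_const.add (continuous_id.mul continuous_const)).tendsto 0
      rw [zero_mul, add_zero] at hb
      have hlog := (Real.continuousAt_log (hx'pos a).ne').tendsto.comp hb
      simpa [Function.comp_def] using hlog
    have h9 : 0 ≤ η * c + S 0 := by
      apply ge_of_tendsto hlim
      filter_upwards [Ioo_mem_nhdsGT_of_mem (Set.left_mem_Ico.mpr one_pos)] with t ht
      exact hev t ht
    have hS0 : S 0 = ∑ a, (u a - x' a) * (Real.log (x' a) - Real.log (x a)) + (∑ a, u a - ∑ a, x' a) := by
      rw [hS]
      rw [← Finset.sum_sub_distrib, ← Finset.sum_add_distrib]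
      apply Finset.sum_congr rfl
      intro a _
      simp; ring
    rw [hS0, husum, hx'sum] at h9
    simpa using h9
  -- stability bound
  have hεη : ∀ a, η * ε a ≤ 1 := by
    intro a
    have h := mul_le_mul_of_nonneg_left (hε a).2 hη.le
    rw [mul_one_div, div_self hη.ne'] at h
    exact h
  have hstab : η * (∑ a, (x a - x' a) * g a)
      - ∑ a, x' a * (Real.log (x' a) - Real.log (x a))
      ≤ η^2 * (∑ a, x a * ℓ a ^ 2) + η^2 * (∑ a, ε a ^ 2 * (Real.log (x a))^2) := by
    have hcoord : ∀ a, (x a - x' a) * (η * g a)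
        - x' a * (Real.log (x' a) - Real.log (x a)) + x' a - x a
        ≤ x a * (η * ℓ a) ^ 2 + (η * ε a * (-Real.log (x a))) ^ 2 := by
      intro a
      have hlognp : Real.log (x a) ≤ 0 := Real.log_nonpos (hxpos a).le (hx1 a)
      have hs0 : 0 ≤ η * ε a * (-Real.log (x a)) :=
        mul_nonneg (mul_nonneg hη.le (hε a).1) (by linarith)
      have hsu : η * ε a * (-Real.log (x a)) ≤ -Real.log (x a) := by
        nlinarith [hεη a, (hε a).1]
      have h := coord_bound (x a) (x' a) (η * ℓ a) (η * ε a * (-Real.log (x a)))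
        (hxpos a) (hx'0 a) (mul_nonneg hη.le (hℓ a)) hs0 hsu
      have he : η * ℓ a - η * ε a * (-Real.log (x a)) = η * g a := by
        simp only [hg]; ring
      rw [he] at h
      linarith [h]
    have hsum : ∑ a, ((x a - x' a) * (η * g a)
        - x' a * (Real.log (x' a) - Real.log (x a)) + x' a - x a)
        ≤ ∑ a, (x a * (η * ℓ a) ^ 2 + (η * ε a * (-Real.log (x a))) ^ 2) :=
      Finset.sum_le_sum (fun a _ => hcoord a)
    have e1 : ∑ a, ((x a - x' a) * (η * g a)
        - x' a * (Real.log (x' a) - Real.log (x a)) + x' a - x a)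
        = η * (∑ a, (x a - x' a) * g a)
          - (∑ a, x' a * (Real.log (x' a) - Real.log (x a))) + (∑ a, x' a) - (∑ a, x a) := by
      rw [Finset.mul_sum, ← Finset.sum_sub_distrib, ← Finset.sum_add_distrib, ← Finset.sum_sub_distrib]
      apply Finset.sum_congr rfl
      intro a _
      ring
    have e2 : ∑ a, (x a * (η * ℓ a) ^ 2 + (η * ε a * (-Real.log (x a))) ^ 2)
        = η^2 * (∑ a, x a * ℓ a ^ 2) + η^2 * (∑ a, ε a ^ 2 * (Real.log (x a))^2) := by
      rw [Finset.mul_sum, Finset.mul_sum, ← Finset.sum_add_distrib]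
      apply Finset.sum_congr rfl
      intro a _
      ring
    rw [e1, e2, hx'sum, hxsum] at hsum
    linarith [hsum]
  -- KL identities
  have e3 : ∑ a, (u a - x' a) * (Real.log (x' a) - Real.log (x a))
      = ∑ a, u a * (Real.log (x' a) - Real.log (x a))
        - ∑ a, x' a * (Real.log (x' a) - Real.log (x a)) := by
    rw [← Finset.sum_sub_distrib]
    apply Finset.sum_congr rfl
    intro a _
    ring
  have e4 : KLdiv u x - KLdiv u x' = ∑ a, u a * (Real.log (x' a) - Real.log (x a)) := by
    rw [hKL u x hxpos, hKL u x' hx'pos, ← Finset.sum_sub_distrib]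
    apply Finset.sum_congr rfl
    intro a _
    ring
  have e5 : ∑ a, (x a - u a) * g a = ∑ a, (x a - x' a) * g a + ∑ a, (x' a - u a) * g a := by
    rw [← Finset.sum_add_distrib]
    apply Finset.sum_congr rfl
    intro a _
    ring
  have e6 : ∑ a, (x' a - u a) * g a = -∑ a, (u a - x' a) * g a := by
    rw [← Finset.sum_neg_distrib]
    apply Finset.sum_congr rfl
    intro a _
    ring
  -- combine
  have hfin : η * (∑ a, (x a - u a) * g a)
      ≤ (KLdiv u x - KLdiv u x') + η^2 * (∑ a, x a * ℓ a ^ 2)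
        + η^2 * (∑ a, ε a ^ 2 * (Real.log (x a))^2) := by
    rw [e5, e4]
    nlinarith [hFO, hstab, e3, e6]
  have e7 : ((KLdiv u x - KLdiv u x') / η + η * (∑ a, x a * ℓ a ^ 2)
      + η * (∑ a, ε a ^ 2 * (Real.log (x a))^2)) * η
      = (KLdiv u x - KLdiv u x') + η^2 * (∑ a, x a * ℓ a ^ 2)
        + η^2 * (∑ a, ε a ^ 2 * (Real.log (x a))^2) := by
    field_simp
  rw [← mul_le_mul_iff_of_pos_right hη, e7]
  linarith [hfin]
end

section
/- Let $\alpha_\tau = \frac{H+1}{H+\tau}$ for $\tau \ge 1$ and some $H \ge 1$, and define $\alpha^i_\tau = \alpha_i \prod_{j=i+1}^{\tau}(1-\alpha_j)$ for $1 \le i \le \tau$. Then $\sum_{i=1}^{\tau} \alpha^i_\tau = 1$ for every $\tau \ge 1$, and for every $i \ge 1$, $\sum_{\tau=i}^{\infty}\alpha^i_\tau \le 1 + \frac{1}{H}$. -/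
theorem stmt_11 (H : ℝ) (hH : 1 ≤ H)
    (α : ℕ → ℝ) (hα : ∀ τ, α τ = (H + 1) / (H + τ))
    (w : ℕ → ℕ → ℝ)
    (hw : ∀ i τ, w i τ = α i * ∏ j ∈ Finset.Icc (i + 1) τ, (1 - α j)) :
    (∀ τ, 1 ≤ τ → ∑ i ∈ Finset.Icc 1 τ, w i τ = 1) ∧
    (∀ i, 1 ≤ i → ∑' τ : ℕ, (if i ≤ τ then w i τ else 0) ≤ 1 + 1 / H) := by
  have hH0 : (0:ℝ) < H := lt_of_lt_of_le one_pos hH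
  have hHj : ∀ j : ℕ, (0:ℝ) < H + j := by
    intro j
    have : (0:ℝ) ≤ (j:ℝ) := Nat.cast_nonneg j
    linarith
  have hα0 : ∀ j : ℕ, 0 ≤ α j := by
    intro j
    rw [hα]
    exact div_nonneg (by linarith) (hHj j).le
  have h1α : ∀ j : ℕ, 1 ≤ j → 0 ≤ 1 - α j := by
    intro j hj
    rw [hα, sub_nonneg]
    have : (1:ℝ) ≤ (j:ℝ) := by exact_mod_cast hj
    rw [div_le_one (hHj j)]
    linarith
  have hprod0 : ∀ i t : ℕ, 0 ≤ ∏ j ∈ Finset.Icc (i+1) t, (1 - α j) := by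
    intro i t
    apply Finset.prod_nonneg
    intro j hj
    exact h1α j (le_trans (Nat.succ_le_succ (Nat.zero_le i)) (Finset.mem_Icc.mp hj).1)
  have hw0 : ∀ i t : ℕ, 0 ≤ w i t := by
    intro i t
    rw [hw]
    exact mul_nonneg (hα0 i) (hprod0 i t)
  have hwdiag : ∀ t : ℕ, w t t = α t := by
    intro t
    rw [hw, Finset.Icc_eq_empty (by omega), Finset.prod_empty, mul_one]
  constructor
  · -- part 1
    intro τ hτ
    induction τ with
    | zero => omega
    | succ n ih =>
      rcases Nat.lt_or_ge n 1 with hn | hn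
      · interval_cases n
        rw [Finset.Icc_self, Finset.sum_singleton, hwdiag, hα]
        push_cast
        field_simp
      · have hstep : ∀ i : ℕ, i ≤ n → w i (n+1) = w i n * (1 - α (n+1)) := by
          intro i hin
          rw [hw, hw, Finset.prod_Icc_succ_top (by omega : i + 1 ≤ n + 1), mul_assoc]
        rw [Finset.sum_Icc_succ_top (by omega : 1 ≤ n + 1), hwdiag]
        have : ∑ i ∈ Finset.Icc 1 n, w i (n+1)
            = (∑ i ∈ Finset.Icc 1 n, w i n) * (1 - α (n+1)) := by
          rw [Finset.sum_mul]
          exact Finset.sum_congr rfl fun i hi => hstep i (Finset.mem_Icc.mp hi).2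
        rw [this, ih hn, one_mul]
        ring
  · -- part 2
    intro i hi
    set f : ℕ → ℝ := fun τ => if i ≤ τ then w i τ else 0 with hf
    by_cases hsum : Summable f
    · apply Summable.tsum_le_of_sum_le hsum
      intro s
      set b : ℕ → ℝ := fun t => α i / H * ((t:ℝ) + H) * ∏ j ∈ Finset.Icc (i+1) t, (1 - α j)
        with hb
      have hb0 : ∀ t : ℕ, 0 ≤ b t := by
        intro t
        apply mul_nonneg (mul_nonneg (div_nonneg (hα0 i) hH0.le) _) (hprod0 i t)
        have : (0:ℝ) ≤ (t:ℝ) := Nat.cast_nonneg t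
        linarith
      have hkey : ∀ t : ℕ, i ≤ t → w i t = b t - b (t+1) := by
        intro t hit
        rw [hw, hb]
        simp only
        rw [Finset.prod_Icc_succ_top (by omega : i + 1 ≤ t + 1), hα (t+1)]
        push_cast
        have h1 : H + ((t:ℝ) + 1) ≠ 0 := by have := hHj (t+1); push_cast at this; linarith
        field_simp
        ring
      have htel : ∀ T : ℕ, i ≤ T → ∑ t ∈ Finset.Icc i T, w i t = b i - b (T+1) := by
        intro T hT
        induction T, hT using Nat.le_induction with
        | base => rw [Finset.Icc_self, Finset.sum_singleton, hkey i le_rfl]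
        | succ T hT ih =>
          rw [Finset.sum_Icc_succ_top (le_trans hT (Nat.le_succ T)), ih, hkey (T+1) (by omega)]
          ring
      have hbi : b i = 1 + 1 / H := by
        rw [hb]
        simp only
        rw [Finset.Icc_eq_empty (by omega), Finset.prod_empty, mul_one, hα]
        have h2 : H + (i:ℝ) ≠ 0 := (hHj i).ne'
        field_simp
        ring
      set T := max (s.sup id) i with hT
      calc ∑ t ∈ s, f t = ∑ t ∈ s.filter (fun t => i ≤ t), w i t :=
            (Finset.sum_filter _ _).symm
        _ ≤ ∑ t ∈ Finset.Icc i T, w i t := by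
            apply Finset.sum_le_sum_of_subset_of_nonneg
            · intro t ht
              rw [Finset.mem_filter] at ht
              rw [Finset.mem_Icc]
              refine ⟨ht.2, le_trans ?_ (le_max_left _ _)⟩
              exact Finset.le_sup (f := id) ht.1
            · intro t _ _
              exact hw0 i t
        _ = b i - b (T+1) := htel T (le_max_right _ _)
        _ ≤ b i := by have := hb0 (T+1); linarith
        _ = 1 + 1 / H := hbi
    · rw [tsum_eq_zero_of_not_summable hsum]
      have : 0 < 1/H := by positivity
      linarith
end

section
/- Consider an infinite-horizon discounted two-player zero-sum Markov game with discount $\gamma \in [0,1)$ and losses in $[0,1]$. For any pair of stationary policies $(x,y)$, the duality gap of the game satisfies $\max_{s,x',y'}(V^s_{x,y'} - V^s_{x',y}) \le \frac{2}{1-\gamma}\max_{s,x',y'}(x^{s\top} Q^s_\star y'^s - x'^{s\top} Q^s_\star y^s)$, where $Q^s_\star$ is the Nash equilibrium Q-function. -/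
/-- A stationary (mixed) policy: a distribution over actions at each state. -/
def IsPolicy {S A : Type*} [Fintype A] (x : S → A → ℝ) : Prop :=
  ∀ s, (∀ a, 0 ≤ x s a) ∧ ∑ a, x s a = 1

lemma comb_le {ι : Type*} [Fintype ι] (w f : ι → ℝ) (C : ℝ)
    (hw : ∀ i, 0 ≤ w i) (hs : ∑ i, w i = 1) (hf : ∀ i, f i ≤ C) :
    ∑ i, w i * f i ≤ C := by
  calc ∑ i, w i * f i ≤ ∑ i, w i * C :=
        Finset.sum_le_sum fun i _ => mul_le_mul_of_nonneg_left (hf i) (hw i)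
    _ = C := by rw [← Finset.sum_mul, hs, one_mul]

lemma comb2_le {S A : Type*} [Fintype S] [Fintype A]
    (p q : A → ℝ) (P : A → A → S → ℝ) (f : S → ℝ) (C : ℝ)
    (hp : ∀ a, 0 ≤ p a) (hps : ∑ a, p a = 1)
    (hq : ∀ b, 0 ≤ q b) (hqs : ∑ b, q b = 1)
    (hP : ∀ a b, (∀ s', 0 ≤ P a b s') ∧ ∑ s', P a b s' = 1)
    (hf : ∀ s', f s' ≤ C) :
    ∑ a, ∑ b, p a * q b * ∑ s', P a b s' * f s' ≤ C := by
  have h1 : ∀ a b, ∑ s', P a b s' * f s' ≤ C := fun a b =>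
    comb_le _ _ _ (hP a b).1 (hP a b).2 hf
  have h2 : ∀ a, ∑ b, q b * ∑ s', P a b s' * f s' ≤ C := fun a =>
    comb_le _ _ _ hq hqs (h1 a)
  calc ∑ a, ∑ b, p a * q b * ∑ s', P a b s' * f s'
      = ∑ a, p a * ∑ b, q b * ∑ s', P a b s' * f s' := by
        simp [Finset.mul_sum, mul_assoc]
    _ ≤ C := comb_le _ _ _ hp hps h2

lemma core {S A : Type*} [Fintype S] [Fintype A]
    (γ : ℝ) (G : S → A → A → ℝ) (P : S → A → A → S → ℝ)
    (Vpq Vstar : S → ℝ) (Qstar : S → A → A → ℝ)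
    (hQ : ∀ s a b, Qstar s a b = G s a b + γ * ∑ s', P s a b s' * Vstar s')
    (p q : S → A → ℝ)
    (hB : ∀ s, Vpq s = ∑ a, ∑ b, p s a * q s b * (G s a b + γ * ∑ s', P s a b s' * Vpq s'))
    (s : S) :
    Vpq s - Vstar s = ((∑ a, ∑ b, p s a * Qstar s a b * q s b) - Vstar s)
      + γ * ∑ a, ∑ b, p s a * q s b * ∑ s', P s a b s' * (Vpq s' - Vstar s') := by
  have key : ∀ a b, p s a * q s b * (G s a b + γ * ∑ s', P s a b s' * Vpq s')
      = p s a * Qstar s a b * q s b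
        + γ * (p s a * q s b * ∑ s', P s a b s' * (Vpq s' - Vstar s')) := by
    intro a b
    rw [hQ s a b]
    have h : ∑ s', P s a b s' * (Vpq s' - Vstar s')
        = (∑ s', P s a b s' * Vpq s') - ∑ s', P s a b s' * Vstar s' := by
      rw [← Finset.sum_sub_distrib]
      exact Finset.sum_congr rfl fun _ _ => by ring
    rw [h]; ring
  have h2 : (∑ a, ∑ b, p s a * q s b * (G s a b + γ * ∑ s', P s a b s' * Vpq s'))
      = (∑ a, ∑ b, p s a * Qstar s a b * q s b)
        + γ * ∑ a, ∑ b, p s a * q s b * ∑ s', P s a b s' * (Vpq s' - Vstar s') := by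
    rw [Finset.mul_sum, ← Finset.sum_add_distrib]
    refine Finset.sum_congr rfl fun a _ => ?_
    rw [Finset.mul_sum, ← Finset.sum_add_distrib]
    exact Finset.sum_congr rfl fun b _ => key a b
  rw [hB s, h2]; ring

lemma core' {S A : Type*} [Fintype S] [Fintype A]
    (γ : ℝ) (G : S → A → A → ℝ) (P : S → A → A → S → ℝ)
    (Vpq Vstar : S → ℝ) (Qstar : S → A → A → ℝ)
    (hQ : ∀ s a b, Qstar s a b = G s a b + γ * ∑ s', P s a b s' * Vstar s')
    (p q : S → A → ℝ)
    (hB : ∀ s, Vpq s = ∑ a, ∑ b, p s a * q s b * (G s a b + γ * ∑ s', P s a b s' * Vpq s'))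
    (s : S) :
    Vstar s - Vpq s = (Vstar s - (∑ a, ∑ b, p s a * Qstar s a b * q s b))
      + γ * ∑ a, ∑ b, p s a * q s b * ∑ s', P s a b s' * (Vstar s' - Vpq s') := by
  have h := core γ G P Vpq Vstar Qstar hQ p q hB s
  have hneg : (∑ a, ∑ b, p s a * q s b * ∑ s', P s a b s' * (Vstar s' - Vpq s'))
      = -(∑ a, ∑ b, p s a * q s b * ∑ s', P s a b s' * (Vpq s' - Vstar s')) := by
    rw [← Finset.sum_neg_distrib]
    refine Finset.sum_congr rfl fun a _ => ?_
    rw [← Finset.sum_neg_distrib]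
    refine Finset.sum_congr rfl fun b _ => ?_
    have : ∑ s', P s a b s' * (Vstar s' - Vpq s')
        = -∑ s', P s a b s' * (Vpq s' - Vstar s') := by
      rw [← Finset.sum_neg_distrib]
      exact Finset.sum_congr rfl fun _ _ => by ring
    rw [this]; ring
  rw [hneg]; linarith

-- V* s = x*ᵀ Q* y* s
lemma star_eq {S A : Type*} [Fintype S] [Fintype A]
    (γ : ℝ) (G : S → A → A → ℝ) (P : S → A → A → S → ℝ)
    (V : (S → A → ℝ) → (S → A → ℝ) → S → ℝ)
    (xstar ystar : S → A → ℝ)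
    (hB : ∀ s, V xstar ystar s = ∑ a, ∑ b, xstar s a * ystar s b *
      (G s a b + γ * ∑ s', P s a b s' * V xstar ystar s'))
    (Vstar : S → ℝ) (hVstar : ∀ s, Vstar s = V xstar ystar s)
    (Qstar : S → A → A → ℝ)
    (hQ : ∀ s a b, Qstar s a b = G s a b + γ * ∑ s', P s a b s' * Vstar s')
    (s : S) :
    Vstar s = ∑ a, ∑ b, xstar s a * Qstar s a b * ystar s b := by
  have h := core γ G P (V xstar ystar) Vstar Qstar hQ xstar ystar hB s
  simp only [← hVstar, sub_self, mul_zero, Finset.sum_const_zero] at h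
  linarith

-- x*ᵀ Q* y' ≤ V* for any policy y'
lemma NE_Q_le {S A : Type*} [Fintype S] [Fintype A]
    (γ : ℝ) (hγ0 : 0 ≤ γ) (hγ1 : γ < 1)
    (G : S → A → A → ℝ) (P : S → A → A → S → ℝ)
    (hP : ∀ s a b, (∀ s', 0 ≤ P s a b s') ∧ ∑ s', P s a b s' = 1)
    (V : (S → A → ℝ) → (S → A → ℝ) → S → ℝ)
    (hBellman : ∀ x y, IsPolicy x → IsPolicy y → ∀ s,
      V x y s = ∑ a, ∑ b, x s a * y s b * (G s a b + γ * ∑ s', P s a b s' * V x y s'))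
    (xstar ystar : S → A → ℝ) (hx : IsPolicy xstar) (hy : IsPolicy ystar)
    (hNE : ∀ x y, IsPolicy x → IsPolicy y → ∀ s,
      V xstar y s ≤ V xstar ystar s ∧ V xstar ystar s ≤ V x ystar s)
    (Vstar : S → ℝ) (hVstar : ∀ s, Vstar s = V xstar ystar s)
    (Qstar : S → A → A → ℝ)
    (hQstar : ∀ s a b, Qstar s a b = G s a b + γ * ∑ s', P s a b s' * Vstar s')
    (y' : S → A → ℝ) (hy' : IsPolicy y') (s0 : S) :
    ∑ a, ∑ b, xstar s0 a * Qstar s0 a b * y' s0 b ≤ Vstar s0 := by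
  classical
  by_contra hcon
  push_neg at hcon
  set yt : S → A → ℝ := fun s => if s = s0 then y' s else ystar s with hyt
  have hytp : IsPolicy yt := by
    intro s
    by_cases h : s = s0 <;> simp only [hyt, h, if_true, if_false, ite_true, ite_false]
    · exact hy' s0
    · exact hy s
  have hW : ∀ s, V xstar yt s ≤ Vstar s := fun s => by
    rw [hVstar]; exact (hNE xstar yt hx hytp s).1
  set f : S → ℝ := fun s => Vstar s - V xstar yt s with hfdef
  have hf0 : ∀ s, 0 ≤ f s := fun s => sub_nonneg.2 (hW s)
  haveI : Nonempty S := ⟨s0⟩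
  obtain ⟨sm, -, hsm⟩ := Finset.exists_max_image Finset.univ f Finset.univ_nonempty
  have hmax : ∀ s, f s ≤ f sm := fun s => hsm s (Finset.mem_univ s)
  have hcore : ∀ s, f s = (Vstar s - ∑ a, ∑ b, xstar s a * Qstar s a b * yt s b)
      + γ * ∑ a, ∑ b, xstar s a * yt s b * ∑ s', P s a b s' * f s' :=
    fun s => core' γ G P (V xstar yt) Vstar Qstar hQstar xstar yt
      (hBellman xstar yt hx hytp) s
  have hVQ : ∀ s, Vstar s = ∑ a, ∑ b, xstar s a * Qstar s a b * ystar s b :=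
    star_eq γ G P V xstar ystar (hBellman xstar ystar hx hy) Vstar hVstar Qstar hQstar
  have hTle : ∀ s, ∑ a, ∑ b, xstar s a * yt s b * ∑ s', P s a b s' * f s' ≤ f sm :=
    fun s => comb2_le (xstar s) (yt s) (fun a b => P s a b) f (f sm)
      (hx s).1 (hx s).2 (hytp s).1 (hytp s).2 (fun a b => hP s a b) hmax
  have step : ∀ s, f s ≤ γ * f sm := by
    intro s
    have h := hcore s
    have hγT := mul_le_mul_of_nonneg_left (hTle s) hγ0
    by_cases hs : s = s0
    · subst hs
      have hq : ∑ a, ∑ b, xstar s a * Qstar s a b * yt s b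
          = ∑ a, ∑ b, xstar s a * Qstar s a b * y' s b := by
        simp [hyt]
      rw [hq] at h
      linarith
    · have hq : ∑ a, ∑ b, xstar s a * Qstar s a b * yt s b
          = ∑ a, ∑ b, xstar s a * Qstar s a b * ystar s b := by
        simp [hyt, hs]
      rw [hq, ← hVQ s] at h
      linarith
  have hΔ0 : f sm ≤ 0 := by nlinarith [step sm, hf0 sm]
  have hT0 : ∑ a, ∑ b, xstar s0 a * yt s0 b * ∑ s', P s0 a b s' * f s' ≤ 0 :=
    le_trans (hTle s0) hΔ0
  have hγT0 : γ * ∑ a, ∑ b, xstar s0 a * yt s0 b * ∑ s', P s0 a b s' * f s' ≤ 0 :=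
    mul_nonpos_of_nonneg_of_nonpos hγ0 hT0
  have h := hcore s0
  have hq : ∑ a, ∑ b, xstar s0 a * Qstar s0 a b * yt s0 b
      = ∑ a, ∑ b, xstar s0 a * Qstar s0 a b * y' s0 b := by simp [hyt]
  rw [hq] at h
  have := hf0 s0
  linarith

-- V* ≤ x'ᵀ Q* y* for any policy x'
lemma NE_Q_ge {S A : Type*} [Fintype S] [Fintype A]
    (γ : ℝ) (hγ0 : 0 ≤ γ) (hγ1 : γ < 1)
    (G : S → A → A → ℝ) (P : S → A → A → S → ℝ)
    (hP : ∀ s a b, (∀ s', 0 ≤ P s a b s') ∧ ∑ s', P s a b s' = 1)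
    (V : (S → A → ℝ) → (S → A → ℝ) → S → ℝ)
    (hBellman : ∀ x y, IsPolicy x → IsPolicy y → ∀ s,
      V x y s = ∑ a, ∑ b, x s a * y s b * (G s a b + γ * ∑ s', P s a b s' * V x y s'))
    (xstar ystar : S → A → ℝ) (hx : IsPolicy xstar) (hy : IsPolicy ystar)
    (hNE : ∀ x y, IsPolicy x → IsPolicy y → ∀ s,
      V xstar y s ≤ V xstar ystar s ∧ V xstar ystar s ≤ V x ystar s)
    (Vstar : S → ℝ) (hVstar : ∀ s, Vstar s = V xstar ystar s)
    (Qstar : S → A → A → ℝ)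
    (hQstar : ∀ s a b, Qstar s a b = G s a b + γ * ∑ s', P s a b s' * Vstar s')
    (x' : S → A → ℝ) (hx' : IsPolicy x') (s0 : S) :
    Vstar s0 ≤ ∑ a, ∑ b, x' s0 a * Qstar s0 a b * ystar s0 b := by
  classical
  by_contra hcon
  push_neg at hcon
  set xt : S → A → ℝ := fun s => if s = s0 then x' s else xstar s with hxt
  have hxtp : IsPolicy xt := by
    intro s
    by_cases h : s = s0 <;> simp only [hxt, h, if_true, if_false, ite_true, ite_false]
    · exact hx' s0
    · exact hx s
  have hW : ∀ s, Vstar s ≤ V xt ystar s := fun s => by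
    rw [hVstar]; exact (hNE xt ystar hxtp hy s).2
  set f : S → ℝ := fun s => V xt ystar s - Vstar s with hfdef
  have hf0 : ∀ s, 0 ≤ f s := fun s => sub_nonneg.2 (hW s)
  haveI : Nonempty S := ⟨s0⟩
  obtain ⟨sm, -, hsm⟩ := Finset.exists_max_image Finset.univ f Finset.univ_nonempty
  have hmax : ∀ s, f s ≤ f sm := fun s => hsm s (Finset.mem_univ s)
  have hcore : ∀ s, f s = ((∑ a, ∑ b, xt s a * Qstar s a b * ystar s b) - Vstar s)
      + γ * ∑ a, ∑ b, xt s a * ystar s b * ∑ s', P s a b s' * f s' :=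
    fun s => core γ G P (V xt ystar) Vstar Qstar hQstar xt ystar
      (hBellman xt ystar hxtp hy) s
  have hVQ : ∀ s, Vstar s = ∑ a, ∑ b, xstar s a * Qstar s a b * ystar s b :=
    star_eq γ G P V xstar ystar (hBellman xstar ystar hx hy) Vstar hVstar Qstar hQstar
  have hTle : ∀ s, ∑ a, ∑ b, xt s a * ystar s b * ∑ s', P s a b s' * f s' ≤ f sm :=
    fun s => comb2_le (xt s) (ystar s) (fun a b => P s a b) f (f sm)
      (hxtp s).1 (hxtp s).2 (hy s).1 (hy s).2 (fun a b => hP s a b) hmax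
  have step : ∀ s, f s ≤ γ * f sm := by
    intro s
    have h := hcore s
    have hγT := mul_le_mul_of_nonneg_left (hTle s) hγ0
    by_cases hs : s = s0
    · subst hs
      have hq : ∑ a, ∑ b, xt s a * Qstar s a b * ystar s b
          = ∑ a, ∑ b, x' s a * Qstar s a b * ystar s b := by
        simp [hxt]
      rw [hq] at h
      linarith
    · have hq : ∑ a, ∑ b, xt s a * Qstar s a b * ystar s b
          = ∑ a, ∑ b, xstar s a * Qstar s a b * ystar s b := by
        simp [hxt, hs]
      rw [hq, ← hVQ s] at h
      linarith
  have hΔ0 : f sm ≤ 0 := by nlinarith [step sm, hf0 sm]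
  have hT0 : ∑ a, ∑ b, xt s0 a * ystar s0 b * ∑ s', P s0 a b s' * f s' ≤ 0 :=
    le_trans (hTle s0) hΔ0
  have hγT0 : γ * ∑ a, ∑ b, xt s0 a * ystar s0 b * ∑ s', P s0 a b s' * f s' ≤ 0 :=
    mul_nonpos_of_nonneg_of_nonpos hγ0 hT0
  have h := hcore s0
  have hq : ∑ a, ∑ b, xt s0 a * Qstar s0 a b * ystar s0 b
      = ∑ a, ∑ b, x' s0 a * Qstar s0 a b * ystar s0 b := by simp [hxt]
  rw [hq] at h
  have := hf0 s0
  linarith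

lemma fixpoint_bound {S A : Type*} [Fintype S] [Fintype A] [Nonempty S]
    (γ : ℝ) (hγ0 : 0 ≤ γ) (hγ1 : γ < 1)
    (P : S → A → A → S → ℝ)
    (hP : ∀ s a b, (∀ s', 0 ≤ P s a b s') ∧ ∑ s', P s a b s' = 1)
    (p q : S → A → ℝ) (hp : IsPolicy p) (hq : IsPolicy q)
    (U c : S → ℝ)
    (hrec : ∀ s, U s = c s + γ * ∑ a, ∑ b, p s a * q s b * ∑ s', P s a b s' * U s')
    (d : ℝ) (hc : ∀ s, c s ≤ d) : ∀ s, U s ≤ d / (1 - γ) := by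
  obtain ⟨sm, -, hsm⟩ := Finset.exists_max_image Finset.univ U Finset.univ_nonempty
  have hmax : ∀ s, U s ≤ U sm := fun s => hsm s (Finset.mem_univ s)
  have hpos : 0 < 1 - γ := by linarith
  have hT : ∑ a, ∑ b, p sm a * q sm b * ∑ s', P sm a b s' * U s' ≤ U sm :=
    comb2_le (p sm) (q sm) (fun a b => P sm a b) U (U sm)
      (hp sm).1 (hp sm).2 (hq sm).1 (hq sm).2 (fun a b => hP sm a b) hmax
  have hb : U sm ≤ d + γ * U sm := by
    have h2 := hrec sm
    have h3 := mul_le_mul_of_nonneg_left hT hγ0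
    have h4 := hc sm
    linarith
  have hfin : U sm ≤ d / (1 - γ) := by
    rw [le_div_iff₀ hpos]; nlinarith
  exact fun s => le_trans (hmax s) hfin

theorem stmt_13 {S A : Type*} [Fintype S] [Fintype A]
    (γ : ℝ) (hγ0 : 0 ≤ γ) (hγ1 : γ < 1)
    (G : S → A → A → ℝ) (hG : ∀ s a b, 0 ≤ G s a b ∧ G s a b ≤ 1)
    (P : S → A → A → S → ℝ)
    (hP : ∀ s a b, (∀ s', 0 ≤ P s a b s') ∧ ∑ s', P s a b s' = 1)
    -- value function of stationary policy pairs, characterized by the Bellman equation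
    (V : (S → A → ℝ) → (S → A → ℝ) → S → ℝ)
    (hBellman : ∀ x y, IsPolicy x → IsPolicy y → ∀ s,
      V x y s = ∑ a, ∑ b, x s a * y s b * (G s a b + γ * ∑ s', P s a b s' * V x y s'))
    -- a Nash equilibrium policy pair and the corresponding minimax value and Q-function
    (xstar ystar : S → A → ℝ) (hx : IsPolicy xstar) (hy : IsPolicy ystar)
    (hNE : ∀ x y, IsPolicy x → IsPolicy y → ∀ s,
      V xstar y s ≤ V xstar ystar s ∧ V xstar ystar s ≤ V x ystar s)
    (Vstar : S → ℝ) (hVstar : ∀ s, Vstar s = V xstar ystar s)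
    (Qstar : S → A → A → ℝ)
    (hQstar : ∀ s a b, Qstar s a b = G s a b + γ * ∑ s', P s a b s' * Vstar s')
    -- the given policy pair and a bound on its per-state duality gap w.r.t. `Qstar`
    (x y : S → A → ℝ) (hxp : IsPolicy x) (hyp : IsPolicy y)
    (M : ℝ)
    (hM : ∀ s, ∀ x' y', IsPolicy x' → IsPolicy y' →
      (∑ a, ∑ b, x s a * Qstar s a b * y' s b) - (∑ a, ∑ b, x' s a * Qstar s a b * y s b) ≤ M) :
    ∀ s, ∀ x' y', IsPolicy x' → IsPolicy y' →
      V x y' s - V x' y s ≤ (2 / (1 - γ)) * M := by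
  intro s x' y' hx' hy'
  haveI : Nonempty S := ⟨s⟩
  -- per-state bound on x Q* y' - V*
  have hd1 : ∀ s1, (∑ a, ∑ b, x s1 a * Qstar s1 a b * y' s1 b) - Vstar s1 ≤ M := by
    intro s1
    have h1 := NE_Q_le γ hγ0 hγ1 G P hP V hBellman xstar ystar hx hy hNE
      Vstar hVstar Qstar hQstar y hyp s1
    have h2 := hM s1 xstar y' hx hy'
    linarith
  have hd2 : ∀ s1, Vstar s1 - (∑ a, ∑ b, x' s1 a * Qstar s1 a b * y s1 b) ≤ M := by
    intro s1
    have h1 := NE_Q_ge γ hγ0 hγ1 G P hP V hBellman xstar ystar hx hy hNE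
      Vstar hVstar Qstar hQstar x hxp s1
    have h2 := hM s1 x' ystar hx' hy
    linarith
  have hu1 : ∀ s1, V x y' s1 - Vstar s1 ≤ M / (1 - γ) :=
    fixpoint_bound γ hγ0 hγ1 P hP x y' hxp hy'
      (fun s1 => V x y' s1 - Vstar s1)
      (fun s1 => (∑ a, ∑ b, x s1 a * Qstar s1 a b * y' s1 b) - Vstar s1)
      (fun s1 => core γ G P (V x y') Vstar Qstar hQstar x y'
        (hBellman x y' hxp hy') s1)
      M hd1
  have hu2 : ∀ s1, Vstar s1 - V x' y s1 ≤ M / (1 - γ) :=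
    fixpoint_bound γ hγ0 hγ1 P hP x' y hx' hyp
      (fun s1 => Vstar s1 - V x' y s1)
      (fun s1 => Vstar s1 - (∑ a, ∑ b, x' s1 a * Qstar s1 a b * y s1 b))
      (fun s1 => core' γ G P (V x' y) Vstar Qstar hQstar x' y
        (hBellman x' y hx' hyp) s1)
      M hd2
  have heq : (2 / (1 - γ)) * M = M / (1 - γ) + M / (1 - γ) := by ring
  have := hu1 s
  have := hu2 s
  linarith
end

section
/- Let $(w_t)_{t\ge 1}$ be a sequence in a finite-dimensional space with $\|w_{t+1} - w_t\|_1 \le c/t$ for all $t$ and some constant $c > 0$. If additionally each $w_t$ lies in a set on which a function $F$ is $M$-Lipschitz in $\ell_1$ norm, then $|F(w_{t+1}) - F(w_t)| \le Mc/t$ and $\sum_{i=1}^{t} w^i_t |F(w_{i+1}) - F(w_i)| \le 9 Mc\ln(t)\, t^{-1+h}$, where $w^i_t = \prod_{j=i+1}^t(1 - j^{-h})$ for some $0 < h < 1$ and $t \ge (\frac{24}{1-h}\ln\frac{12}{1-h})^{\frac{1}{1-h}}$. -/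
lemma aux_harm (m : ℕ) (hm : 1 ≤ m) : ∑ i ∈ Finset.Icc 1 m, (1:ℝ)/i ≤ 1 + Real.log m := by
  induction m, hm using Nat.le_induction with
  | base => simp
  | succ n hn ih =>
    rw [Finset.sum_Icc_succ_top (by omega : 1 ≤ n + 1)]
    have hn0 : (0:ℝ) < n := by exact_mod_cast hn
    have hkey : Real.log n + 1/((n:ℝ)+1) ≤ Real.log ((n:ℝ)+1) := by
      have h1 := Real.log_le_sub_one_of_pos (show (0:ℝ) < (n:ℝ)/((n:ℝ)+1) by positivity)
      have h2 : Real.log ((n:ℝ)/((n:ℝ)+1)) = Real.log n - Real.log ((n:ℝ)+1) := by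
        rw [Real.log_div (by positivity) (by positivity)]
      rw [h2] at h1
      have h3 : (n:ℝ)/((n:ℝ)+1) - 1 = -(1/((n:ℝ)+1)) := by field_simp; ring
      linarith [h1, h3 ▸ h1]
    push_cast
    linarith

lemma aux_core (h : ℝ) (hh0 : 0 < h) (hh1 : h < 1) (t : ℕ) (ht2 : 48 ≤ t)
    (hlogx : (3:ℝ) ≤ Real.log t) :
    ∑ i ∈ Finset.Icc 1 t, (∏ j ∈ Finset.Ioc i t, (1 - (j:ℝ) ^ (-h))) * (1/(i:ℝ))
      ≤ 3 * Real.log t * (t:ℝ) ^ (h - 1) := by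
  classical
  set x : ℝ := (t:ℝ) with hxdef
  have hxpos : (0:ℝ) < x := by
    rw [hxdef]; exact_mod_cast (by omega : (0:ℕ) < t)
  have hx48 : (48:ℝ) ≤ x := by rw [hxdef]; exact_mod_cast ht2
  have hnegh : -h ≤ 0 := by linarith
  set Q : ℕ → ℝ := fun i => ∏ j ∈ Finset.Ioc i t, (1 - (j:ℝ) ^ (-h)) with hQdef
  have hfle1 : ∀ j : ℕ, 1 ≤ j → ((j:ℝ)) ^ (-h) ≤ 1 := fun j hj =>
    Real.rpow_le_one_of_one_le_of_nonpos (by exact_mod_cast hj) hnegh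
  have hfnonneg : ∀ j : ℕ, 1 ≤ j → (0:ℝ) ≤ 1 - ((j:ℝ)) ^ (-h) := by
    intro j hj; linarith [hfle1 j hj]
  have hQnonneg : ∀ i, 0 ≤ Q i := by
    intro i
    apply Finset.prod_nonneg
    intro j hj
    have hj1 := (Finset.mem_Ioc.mp hj).1
    exact hfnonneg j (by omega)
  have hQle1 : ∀ i, Q i ≤ 1 := by
    intro i
    apply Finset.prod_le_one
    · intro j hj
      have hj1 := (Finset.mem_Ioc.mp hj).1
      exact hfnonneg j (by omega)
    · intro j hj
      have := Real.rpow_pos_of_pos (show (0:ℝ) < (j:ℝ) by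
        have hj1 := (Finset.mem_Ioc.mp hj).1
        exact_mod_cast (by omega : 0 < j)) (-h)
      linarith
  -- one-step factorization
  have hfactor : ∀ r : ℕ, r < t → Q r = (1 - ((r+1:ℕ):ℝ) ^ (-h)) * Q (r+1) := by
    intro r hr
    show (∏ j ∈ Finset.Ioc r t, (1 - (j:ℝ) ^ (-h))) = _
    rw [← Finset.Icc_add_one_left_eq_Ioc r t, ← Finset.Ioc_insert_left (show r+1 ≤ t from hr),
      Finset.prod_insert (by simp)]
  -- reindex lemma
  have hreindex : ∀ f : ℕ → ℝ, ∑ i ∈ Finset.Icc 1 t, f i = ∑ i ∈ Finset.range t, f (1+i) := by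
    intro f
    rw [← Finset.Ico_add_one_right_eq_Icc, Finset.sum_Ico_eq_sum_range]
    simp
  -- telescoping bound: sum of Q over [1,t] is at most x^h
  have hsumQ : ∑ i ∈ Finset.Icc 1 t, Q i ≤ x ^ h := by
    have htel : ∑ i ∈ Finset.range t, (Q (i+1) - Q i) = Q t - Q 0 :=
      Finset.sum_range_sub Q t
    have hQt : Q t = 1 := by
      show (∏ j ∈ Finset.Ioc t t, (1 - (j:ℝ) ^ (-h))) = 1
      simp
    have hstep2 : ∀ i ∈ Finset.range t, x ^ (-h) * Q (1+i) ≤ Q (i+1) - Q i := by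
      intro i hi
      have hit := Finset.mem_range.mp hi
      have h1 : Q i = (1 - ((i+1:ℕ):ℝ) ^ (-h)) * Q (i+1) := hfactor i hit
      have h2 : Q (i+1) - Q i = ((i+1:ℕ):ℝ) ^ (-h) * Q (i+1) := by rw [h1]; ring
      rw [h2, show 1+i = i+1 from by omega]
      apply mul_le_mul_of_nonneg_right _ (hQnonneg (i+1))
      apply Real.rpow_le_rpow_of_nonpos _ _ hnegh
      · exact_mod_cast (by omega : 0 < i+1)
      · rw [hxdef]; exact_mod_cast (by omega : i+1 ≤ t)
    have h3 : x ^ (-h) * ∑ i ∈ Finset.Icc 1 t, Q i ≤ 1 := by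
      rw [hreindex Q, Finset.mul_sum]
      calc ∑ i ∈ Finset.range t, x ^ (-h) * Q (1+i)
          ≤ ∑ i ∈ Finset.range t, (Q (i+1) - Q i) := Finset.sum_le_sum hstep2
        _ = Q t - Q 0 := htel
        _ ≤ 1 := by rw [hQt]; linarith [hQnonneg 0]
    have hxh : x ^ h * x ^ (-h) = 1 := by
      rw [← Real.rpow_add hxpos]; simp
    calc ∑ i ∈ Finset.Icc 1 t, Q i
        = x ^ h * (x ^ (-h) * ∑ i ∈ Finset.Icc 1 t, Q i) := by
          rw [← mul_assoc, hxh, one_mul]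
      _ ≤ x ^ h * 1 := by
          apply mul_le_mul_of_nonneg_left h3 (Real.rpow_nonneg hxpos.le h)
      _ = x ^ h := mul_one _
  -- midpoint
  set m := t / 2 with hmdef
  have hm1 : 1 ≤ m := by omega
  have hmt : m ≤ t := Nat.div_le_self t 2
  have hmub : (m:ℝ) ≤ x / 2 := by
    rw [hxdef, hmdef]
    calc ((t/2 : ℕ):ℝ) ≤ (t:ℝ)/(2:ℕ) := Nat.cast_div_le
      _ = (t:ℝ)/2 := by norm_num
  have hmlb : (x - 1) / 2 ≤ (m:ℝ) := by
    have h1 : t ≤ 2 * m + 1 := by omega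
    have h2 : x ≤ 2 * (m:ℝ) + 1 := by
      rw [hxdef]; exact_mod_cast h1
    linarith
  set E : ℝ := Real.exp (-(x/2 * x ^ (-h))) with hEdef
  have hEpos : 0 < E := Real.exp_pos _
  -- Q m ≤ E
  have hQmE : Q m ≤ E := by
    have hcard : (Finset.Ioc m t).card = t - m := Nat.card_Ioc m t
    have hxnh : (0:ℝ) < x ^ (-h) := Real.rpow_pos_of_pos hxpos _
    have hsumlb : x/2 * x ^ (-h) ≤ ∑ j ∈ Finset.Ioc m t, ((j:ℝ)) ^ (-h) := by
      have h1 : ∀ j ∈ Finset.Ioc m t, x ^ (-h) ≤ ((j:ℝ)) ^ (-h) := by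
        intro j hj
        obtain ⟨hj1, hj2⟩ := Finset.mem_Ioc.mp hj
        apply Real.rpow_le_rpow_of_nonpos _ _ hnegh
        · exact_mod_cast (by omega : 0 < j)
        · rw [hxdef]; exact_mod_cast hj2
      have h2 := Finset.card_nsmul_le_sum (Finset.Ioc m t) (fun j => ((j:ℝ)) ^ (-h)) (x ^ (-h)) h1
      rw [hcard, nsmul_eq_mul] at h2
      have h3 : x/2 ≤ ((t - m : ℕ):ℝ) := by
        rw [Nat.cast_sub hmt, ← hxdef]; linarith
      calc x/2 * x ^ (-h) ≤ ((t-m:ℕ):ℝ) * x ^ (-h) :=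
            mul_le_mul_of_nonneg_right h3 hxnh.le
        _ ≤ _ := h2
    calc Q m = ∏ j ∈ Finset.Ioc m t, (1 - (j:ℝ) ^ (-h)) := rfl
      _ ≤ ∏ j ∈ Finset.Ioc m t, Real.exp (-((j:ℝ) ^ (-h))) := by
          apply Finset.prod_le_prod
          · intro j hj
            have hj1 := (Finset.mem_Ioc.mp hj).1
            exact hfnonneg j (by omega)
          · intro j hj
            have := Real.add_one_le_exp (-((j:ℝ) ^ (-h)))
            linarith
      _ = Real.exp (∑ j ∈ Finset.Ioc m t, -((j:ℝ) ^ (-h))) := (Real.exp_sum _ _).symm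
      _ ≤ E := by
          rw [hEdef]
          apply Real.exp_le_exp.mpr
          rw [Finset.sum_neg_distrib]
          linarith [hsumlb]
  -- Q i ≤ E for 1 ≤ i ≤ m
  have hQiE : ∀ i : ℕ, i ≤ m → Q i ≤ E := by
    intro i him
    have hsplit : (∏ j ∈ Finset.Ioc i m, (1 - (j:ℝ) ^ (-h))) *
        (∏ j ∈ Finset.Ioc m t, (1 - (j:ℝ) ^ (-h))) = Q i :=
      Finset.prod_Ioc_consecutive _ him hmt
    have hfirst : (∏ j ∈ Finset.Ioc i m, (1 - (j:ℝ) ^ (-h))) ≤ 1 := by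
      apply Finset.prod_le_one
      · intro j hj
        have hj1 := (Finset.mem_Ioc.mp hj).1
        exact hfnonneg j (by omega)
      · intro j hj
        have hj1 := (Finset.mem_Ioc.mp hj).1
        have := Real.rpow_pos_of_pos (show (0:ℝ) < (j:ℝ) from by exact_mod_cast (by omega : 0 < j)) (-h)
        linarith
    calc Q i = (∏ j ∈ Finset.Ioc i m, (1 - (j:ℝ) ^ (-h))) * Q m := hsplit.symm
      _ ≤ Q m := mul_le_of_le_one_left (hQnonneg m) hfirst
      _ ≤ E := hQmE
  -- E ≤ x^(h-1)
  have hExh : E ≤ x ^ (h - 1) := by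
    have hy : x * x ^ (-h) = x ^ (1 - h) := by
      rw [show (1:ℝ) - h = 1 + (-h) from by ring, Real.rpow_add hxpos, Real.rpow_one]
    set y : ℝ := x ^ (1 - h) with hydef
    have hy0 : 0 < y := Real.rpow_pos_of_pos hxpos _
    have hxh1 : x ^ (h - 1) = y⁻¹ := by
      rw [hydef, ← Real.rpow_neg hxpos.le, show -(1-h) = h - 1 from by ring]
    have hE' : E = Real.exp (-(y/2)) := by
      rw [hEdef, ← hy]; ring_nf
    have hyexp : y ≤ Real.exp (y/2) := by
      have h4 := Real.add_one_le_exp (y/4)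
      have h5 : Real.exp (y/2) = Real.exp (y/4) * Real.exp (y/4) := by
        rw [← Real.exp_add]; ring_nf
      nlinarith [Real.exp_pos (y/4), sq_nonneg (1 - y/4)]
    rw [hE', hxh1, Real.exp_neg]
    exact inv_anti₀ hy0 hyexp
  -- split the sum
  have hsplit : ∑ i ∈ Finset.Icc 1 t, Q i * (1/(i:ℝ))
      = (∑ i ∈ Finset.Ioc 0 m, Q i * (1/(i:ℝ))) + ∑ i ∈ Finset.Ioc m t, Q i * (1/(i:ℝ)) := by
    rw [Finset.sum_Ioc_consecutive _ (Nat.zero_le m) hmt, ← Finset.Icc_add_one_left_eq_Ioc, zero_add]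
  have hlogxpos : (0:ℝ) < Real.log x := by rw [hxdef]; linarith
  -- first part
  have hT1 : ∑ i ∈ Finset.Ioc 0 m, Q i * (1/(i:ℝ)) ≤ E * (2 * Real.log x) := by
    have h1 : ∑ i ∈ Finset.Ioc 0 m, Q i * (1/(i:ℝ)) ≤ ∑ i ∈ Finset.Ioc 0 m, E * (1/(i:ℝ)) := by
      apply Finset.sum_le_sum
      intro i hi
      obtain ⟨hi1, hi2⟩ := Finset.mem_Ioc.mp hi
      apply mul_le_mul_of_nonneg_right (hQiE i hi2)
      positivity
    have h2 : ∑ i ∈ Finset.Ioc 0 m, E * (1/(i:ℝ)) = E * ∑ i ∈ Finset.Icc 1 m, (1:ℝ)/i := by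
      rw [← Finset.mul_sum, ← Finset.Icc_add_one_left_eq_Ioc, zero_add]
    have h3 : ∑ i ∈ Finset.Icc 1 m, (1:ℝ)/i ≤ 2 * Real.log x := by
      have := aux_harm m hm1
      have hlogm : Real.log m ≤ Real.log x := by
        apply Real.log_le_log (by exact_mod_cast hm1)
        rw [hxdef]; exact_mod_cast hmt
      linarith
    calc ∑ i ∈ Finset.Ioc 0 m, Q i * (1/(i:ℝ)) ≤ E * ∑ i ∈ Finset.Icc 1 m, (1:ℝ)/i := by
          rw [← h2]; exact h1
      _ ≤ E * (2 * Real.log x) := mul_le_mul_of_nonneg_left h3 hEpos.le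
  -- second part
  have hT2 : ∑ i ∈ Finset.Ioc m t, Q i * (1/(i:ℝ)) ≤ 2 * x ^ (h - 1) := by
    have h1 : ∀ i ∈ Finset.Ioc m t, Q i * (1/(i:ℝ)) ≤ Q i * (2/x) := by
      intro i hi
      obtain ⟨hi1, hi2⟩ := Finset.mem_Ioc.mp hi
      apply mul_le_mul_of_nonneg_left _ (hQnonneg i)
      have hix : x/2 ≤ (i:ℝ) := by
        have : (m:ℝ) + 1 ≤ (i:ℝ) := by exact_mod_cast hi1
        linarith
      have hipos : (0:ℝ) < (i:ℝ) := by linarith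
      calc 1/(i:ℝ) ≤ 1/(x/2) := by
            apply one_div_le_one_div_of_le (by linarith) hix
        _ = 2/x := by field_simp
    have h2 : ∑ i ∈ Finset.Ioc m t, Q i ≤ x ^ h := by
      calc ∑ i ∈ Finset.Ioc m t, Q i ≤ ∑ i ∈ Finset.Icc 1 t, Q i := by
            apply Finset.sum_le_sum_of_subset_of_nonneg
            · intro i hi
              rw [Finset.mem_Ioc] at hi
              rw [Finset.mem_Icc]
              omega
            · intro i _ _; exact hQnonneg i
        _ ≤ x ^ h := hsumQ
    have h3 : x ^ h * (2/x) = 2 * x ^ (h - 1) := by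
      rw [show h - 1 = h + (-1) from by ring, Real.rpow_add hxpos, Real.rpow_neg_one]
      field_simp
    calc ∑ i ∈ Finset.Ioc m t, Q i * (1/(i:ℝ)) ≤ ∑ i ∈ Finset.Ioc m t, Q i * (2/x) :=
          Finset.sum_le_sum h1
      _ = (∑ i ∈ Finset.Ioc m t, Q i) * (2/x) := by rw [Finset.sum_mul]
      _ ≤ x ^ h * (2/x) := by
          apply mul_le_mul_of_nonneg_right h2 (by positivity)
      _ = 2 * x ^ (h - 1) := h3
  -- combine
  have hxh1pos : (0:ℝ) < x ^ (h-1) := Real.rpow_pos_of_pos hxpos _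
  have hfinal : E * (2 * Real.log x) + 2 * x ^ (h-1) ≤ 3 * Real.log x * x ^ (h-1) := by
    have h1 : E * (2 * Real.log x) ≤ x ^ (h-1) * (2 * Real.log x) := by
      apply mul_le_mul_of_nonneg_right hExh (by linarith)
    have h2 : 2 * x ^ (h-1) ≤ Real.log x * x ^ (h-1) := by
      apply mul_le_mul_of_nonneg_right _ hxh1pos.le
      rw [hxdef]; linarith
    nlinarith
  calc ∑ i ∈ Finset.Icc 1 t, Q i * (1/(i:ℝ))
      ≤ E * (2 * Real.log x) + 2 * x ^ (h-1) := by rw [hsplit]; linarith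
    _ ≤ 3 * Real.log x * x ^ (h-1) := hfinal


theorem stmt_16 {n : ℕ} (w : ℕ → (Fin n → ℝ)) (c : ℝ) (hc : 0 < c)
    (hstep : ∀ t : ℕ, 1 ≤ t → ∑ a, |w (t + 1) a - w t a| ≤ c / t)
    (K : Set (Fin n → ℝ)) (hK : ∀ t, w t ∈ K)
    (F : (Fin n → ℝ) → ℝ) (M : ℝ) (hM : 0 ≤ M)
    (hLip : ∀ u ∈ K, ∀ v ∈ K, |F u - F v| ≤ M * ∑ a, |u a - v a|)
    (h : ℝ) (hh0 : 0 < h) (hh1 : h < 1) (t : ℕ)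
    (ht : ((24 / (1 - h)) * Real.log (12 / (1 - h))) ^ ((1:ℝ) / (1 - h)) ≤ (t : ℝ)) :
    (∀ i : ℕ, 1 ≤ i → |F (w (i + 1)) - F (w i)| ≤ M * c / i) ∧
    ∑ i ∈ Finset.Icc 1 t,
        (∏ j ∈ Finset.Icc (i + 1) t, (1 - (j : ℝ) ^ (-h))) * |F (w (i + 1)) - F (w i)|
      ≤ 9 * M * c * Real.log t * (t : ℝ) ^ (-1 + h) := by
  have part1 : ∀ i : ℕ, 1 ≤ i → |F (w (i + 1)) - F (w i)| ≤ M * c / i := by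
    intro i hi
    have h1 := hLip (w (i+1)) (hK _) (w i) (hK _)
    have h2 := hstep i hi
    calc |F (w (i+1)) - F (w i)| ≤ M * ∑ a, |w (i+1) a - w i a| := h1
      _ ≤ M * (c / i) := mul_le_mul_of_nonneg_left h2 hM
      _ = M * c / i := by ring
  refine ⟨part1, ?_⟩
  -- derive size bounds on t
  have hh1' : (0:ℝ) < 1 - h := by linarith
  have he1 := Real.exp_one_lt_d9
  have he1p := Real.exp_pos 1
  have hlog12 : (2:ℝ) ≤ Real.log (12 / (1-h)) := by
    have h12 : (12:ℝ) ≤ 12/(1-h) := by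
      rw [le_div_iff₀ hh1']; nlinarith
    have hexp2 : Real.exp 2 ≤ 12 := by
      have e2 : Real.exp 2 = Real.exp 1 * Real.exp 1 := by
        rw [← Real.exp_add]; norm_num
      nlinarith
    calc (2:ℝ) = Real.log (Real.exp 2) := (Real.log_exp 2).symm
      _ ≤ Real.log (12/(1-h)) := by
          apply Real.log_le_log (Real.exp_pos 2); linarith
  have hA : (48:ℝ) ≤ (24/(1-h)) * Real.log (12/(1-h)) := by
    have h24 : (24:ℝ) ≤ 24/(1-h) := by rw [le_div_iff₀ hh1']; nlinarith
    nlinarith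
  have ht48 : (48:ℝ) ≤ (t:ℝ) := by
    have h1le : (1:ℝ) ≤ 1/(1-h) := by rw [le_div_iff₀ hh1']; linarith
    have hA1 : (1:ℝ) ≤ (24/(1-h)) * Real.log (12/(1-h)) := by linarith
    have h5 := Real.rpow_le_rpow_of_exponent_le hA1 h1le
    rw [Real.rpow_one] at h5
    linarith [le_trans h5 ht]
  have ht48' : 48 ≤ t := by exact_mod_cast ht48
  have hlogx : (3:ℝ) ≤ Real.log t := by
    have hexp3 : Real.exp 3 ≤ 48 := by
      have e3 : Real.exp 3 = Real.exp 1 * Real.exp 1 * Real.exp 1 := by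
        rw [← Real.exp_add, ← Real.exp_add]; norm_num
      nlinarith
    calc (3:ℝ) = Real.log (Real.exp 3) := (Real.log_exp 3).symm
      _ ≤ Real.log t := by apply Real.log_le_log (Real.exp_pos 3); linarith
  have hxpos : (0:ℝ) < (t:ℝ) := by linarith
  have hnegh : -h ≤ 0 := by linarith
  -- rewrite products to Ioc form
  have hIcc : ∀ i : ℕ, Finset.Icc (i+1) t = Finset.Ioc i t := fun i => Finset.Icc_add_one_left_eq_Ioc i t
  have hQnonneg : ∀ i : ℕ, 0 ≤ ∏ j ∈ Finset.Ioc i t, (1 - (j:ℝ) ^ (-h)) := by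
    intro i
    apply Finset.prod_nonneg
    intro j hj
    have hj1 := (Finset.mem_Ioc.mp hj).1
    have : ((j:ℝ)) ^ (-h) ≤ 1 :=
      Real.rpow_le_one_of_one_le_of_nonpos (by exact_mod_cast (by omega : 1 ≤ j)) hnegh
    linarith
  have hMc : 0 ≤ M * c := mul_nonneg hM hc.le
  have hcore := aux_core h hh0 hh1 t ht48' hlogx
  have hXpos : (0:ℝ) < (t:ℝ) ^ (h - 1) := Real.rpow_pos_of_pos hxpos _
  have hlogpos : (0:ℝ) < Real.log t := by linarith
  calc ∑ i ∈ Finset.Icc 1 t,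
        (∏ j ∈ Finset.Icc (i + 1) t, (1 - (j : ℝ) ^ (-h))) * |F (w (i + 1)) - F (w i)|
      = ∑ i ∈ Finset.Icc 1 t,
        (∏ j ∈ Finset.Ioc i t, (1 - (j : ℝ) ^ (-h))) * |F (w (i + 1)) - F (w i)| := by
        apply Finset.sum_congr rfl; intro i _; rw [hIcc i]
    _ ≤ ∑ i ∈ Finset.Icc 1 t,
        (M * c) * ((∏ j ∈ Finset.Ioc i t, (1 - (j : ℝ) ^ (-h))) * (1/(i:ℝ))) := by
        apply Finset.sum_le_sum
        intro i hi
        obtain ⟨hi1, hi2⟩ := Finset.mem_Icc.mp hi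
        calc (∏ j ∈ Finset.Ioc i t, (1 - (j : ℝ) ^ (-h))) * |F (w (i + 1)) - F (w i)|
            ≤ (∏ j ∈ Finset.Ioc i t, (1 - (j : ℝ) ^ (-h))) * (M * c / i) :=
              mul_le_mul_of_nonneg_left (part1 i hi1) (hQnonneg i)
          _ = (M * c) * ((∏ j ∈ Finset.Ioc i t, (1 - (j : ℝ) ^ (-h))) * (1/(i:ℝ))) := by
              ring
    _ = (M * c) * ∑ i ∈ Finset.Icc 1 t,
        (∏ j ∈ Finset.Ioc i t, (1 - (j : ℝ) ^ (-h))) * (1/(i:ℝ)) := by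
        rw [Finset.mul_sum]
    _ ≤ (M * c) * (3 * Real.log t * (t:ℝ) ^ (h - 1)) :=
        mul_le_mul_of_nonneg_left hcore hMc
    _ ≤ 9 * M * c * Real.log t * (t : ℝ) ^ (-1 + h) := by
        rw [show (-1:ℝ) + h = h - 1 from by ring]
        nlinarith [mul_pos hlogpos hXpos]
end
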